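/- Let f : {0,1}^k → ℝ≥0 be a symmetric set function (f(x) = f(x̄) for all x, where x̄ is the coordinatewise complement), and for t ∈ {0,...,k} let a(t) be the average of f over strings of Hamming weight t. If a is monotonely nondecreasing on [0, k/2], then max over p ∈ [0,1] of E_{x ~ Bernoulli(p)^k}[f(x)] is attained at p = 1/2, i.e., it equals 2^{-k} ∑_{x ∈ {0,1}^k} f(x). -/

import Mathlib

open Finset

/-- Hamming weight of `x : Fin k → Bool`. -/
def hw {k : ℕ} (x : Fin k → Bool) : ℕ := (univ.filter fun i => x i = true).card

/-- Expectation of `f` under the `p`-biased product distribution on `{0,1}^k`. -/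
noncomputable def biasedE (k : ℕ) (f : (Fin k → Bool) → ℝ) (p : ℝ) : ℝ :=
  ∑ x : Fin k → Bool, f x * p ^ hw x * (1 - p) ^ (k - hw x)

/-- Average of `f` over strings of Hamming weight `t`. -/
noncomputable def levelAvg (k : ℕ) (f : (Fin k → Bool) → ℝ) (t : ℕ) : ℝ :=
  (1 / (k.choose t : ℝ)) * ∑ x ∈ univ.filter (fun x : Fin k → Bool => hw x = t), f x

/-- Binomial weight. -/
noncomputable def Wb (k t : ℕ) (p : ℝ) : ℝ := (k.choose t : ℝ) * p ^ t * (1 - p) ^ (k - t)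

/-- Partial sum (binomial CDF). -/
noncomputable def Lc (k s : ℕ) (p : ℝ) : ℝ := ∑ t ∈ range s, Wb k t p

/-- Symmetrized lower+upper tail. -/
noncomputable def Hf (k s : ℕ) (p : ℝ) : ℝ := Lc k s p + Lc k s (1 - p)

lemma hw_le {k : ℕ} (x : Fin k → Bool) : hw x ≤ k := by
  classical
  simpa [hw] using (card_filter_le univ fun i => x i = true)

lemma hw_not {k : ℕ} (x : Fin k → Bool) : hw (fun i => !x i) = k - hw x := by
  classical
  unfold hw
  have h : (univ.filter fun i => (!x i) = true) = (univ.filter fun i => x i = true)ᶜ := by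
    ext i; simp
  rw [h, Finset.card_compl, Fintype.card_fin]

lemma sum_fiber (k : ℕ) (f : (Fin k → Bool) → ℝ) {t : ℕ} (ht : t ≤ k) :
    ∑ x ∈ univ.filter (fun x : Fin k → Bool => hw x = t), f x
      = (k.choose t : ℝ) * levelAvg k f t := by
  have hc : (0 : ℝ) < (k.choose t : ℝ) := by exact_mod_cast Nat.choose_pos ht
  unfold levelAvg
  field_simp

lemma levelAvg_symm (k : ℕ) (f : (Fin k → Bool) → ℝ)
    (hsym : ∀ x, f x = f (fun i => ! x i)) {t : ℕ} (ht : t ≤ k) :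
    levelAvg k f (k - t) = levelAvg k f t := by
  unfold levelAvg
  rw [Nat.choose_symm ht]
  congr 1
  refine Finset.sum_bij' (fun x _ => fun i => !x i) (fun x _ => fun i => !x i) ?_ ?_ ?_ ?_ ?_
  · intro x hx
    simp only [Finset.mem_filter, Finset.mem_univ, true_and] at hx ⊢
    rw [hw_not, hx, Nat.sub_sub_self ?_]
    omega
  · intro x hx
    simp only [Finset.mem_filter, Finset.mem_univ, true_and] at hx ⊢
    rw [hw_not, hx]
  · intro x _; funext i; simp
  · intro x _; funext i; simp
  · intro x _; exact hsym x

lemma biasedE_eq (k : ℕ) (f : (Fin k → Bool) → ℝ) (p : ℝ) :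
    biasedE k f p = ∑ t ∈ range (k + 1), levelAvg k f t * Wb k t p := by
  classical
  unfold biasedE
  rw [← Finset.sum_fiberwise_of_maps_to (g := fun x : Fin k → Bool => hw x)
      (t := range (k + 1)) (fun x _ => Finset.mem_range.2 (Nat.lt_succ_of_le (hw_le x)))]
  refine Finset.sum_congr rfl fun t ht => ?_
  have ht' : t ≤ k := Nat.lt_succ_iff.1 (Finset.mem_range.1 ht)
  have : ∑ x ∈ univ.filter (fun x : Fin k → Bool => hw x = t),
      f x * p ^ hw x * (1 - p) ^ (k - hw x)
      = ∑ x ∈ univ.filter (fun x : Fin k → Bool => hw x = t),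
      f x * (p ^ t * (1 - p) ^ (k - t)) := by
    refine Finset.sum_congr rfl fun x hx => ?_
    simp only [Finset.mem_filter] at hx
    rw [hx.2]; ring
  rw [this, ← Finset.sum_mul, sum_fiber k f ht']
  unfold Wb; ring

lemma sum_Wb (k : ℕ) (p : ℝ) : ∑ t ∈ range (k + 1), Wb k t p = 1 := by
  have h := add_pow p (1 - p) k
  have h1 : p + (1 - p) = 1 := by ring
  rw [h1, one_pow] at h
  rw [h]
  refine Finset.sum_congr rfl fun t _ => ?_
  unfold Wb; ring

lemma Wb_symm (k : ℕ) {t : ℕ} (ht : t ≤ k) (p : ℝ) : Wb k (k - t) p = Wb k t (1 - p) := by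
  unfold Wb
  rw [Nat.choose_symm ht, Nat.sub_sub_self ht, sub_sub_cancel]
  ring

/-- Derivative building block. -/
noncomputable def Db (k m : ℕ) (p : ℝ) : ℝ :=
  (k : ℝ) * ((k-1).choose m : ℝ) * p ^ m * (1 - p) ^ (k - 1 - m)

lemma choose_id1 {k t : ℕ} (ht1 : 1 ≤ t) (htk : t ≤ k) :
    k.choose t * t = k * (k-1).choose (t-1) := by
  have h := Nat.add_one_mul_choose_eq (k-1) (t-1)
  have hk : k - 1 + 1 = k := by omega
  have ht : t - 1 + 1 = t := by omega
  rw [hk, ht] at h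
  omega

lemma choose_id2 {k t : ℕ} (htk : t < k) :
    k.choose t * (k - t) = k * (k-1).choose t := by
  have h1 : k.choose (k - t) * (k - t) = k * (k-1).choose (k - t - 1) :=
    choose_id1 (by omega) (by omega)
  have h2 : k.choose (k - t) = k.choose t := Nat.choose_symm htk.le
  have h3 : k - t - 1 = (k - 1) - t := by omega
  have h4 : (k-1).choose ((k-1) - t) = (k-1).choose t := Nat.choose_symm (by omega)
  rw [h2, h3, h4] at h1
  exact h1

lemma hasDerivAt_Wb_zero (k : ℕ) (hk : 0 < k) (p : ℝ) :
    HasDerivAt (fun q => Wb k 0 q) (-(Db k 0 p)) p := by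
  have h2 : HasDerivAt (fun q : ℝ => (1 - q) ^ k) (((k : ℕ):ℝ) * (1 - p) ^ (k - 1) * (-1)) p :=
    (hasDerivAt_pow k (1 - p)).comp p ((hasDerivAt_id p).const_sub 1)
  have hfun : (fun q => Wb k 0 q) = fun q : ℝ => (1 - q) ^ k := by
    funext q; unfold Wb; simp
  rw [hfun]
  convert h2 using 1
  unfold Db
  simp

lemma hasDerivAt_Wb_pos (k : ℕ) {t : ℕ} (ht1 : 1 ≤ t) (htk : t < k) (p : ℝ) :
    HasDerivAt (fun q => Wb k t q) (Db k (t-1) p - Db k t p) p := by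
  have h1 : HasDerivAt (fun q : ℝ => q ^ t) ((t:ℝ) * p ^ (t-1)) p := hasDerivAt_pow t p
  have h2 : HasDerivAt (fun q : ℝ => (1 - q) ^ (k - t))
      (((k - t : ℕ):ℝ) * (1 - p) ^ (k - t - 1) * (-1)) p :=
    (hasDerivAt_pow (k - t) (1 - p)).comp p ((hasDerivAt_id p).const_sub 1)
  have h3 := (h1.mul h2).const_mul ((k.choose t : ℝ))
  have hfun : (fun q => Wb k t q)
      = fun q : ℝ => (k.choose t : ℝ) * (q ^ t * (1 - q) ^ (k - t)) := by
    funext q; unfold Wb; ring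
  rw [hfun]
  refine h3.congr_deriv (Eq.symm ?_)
  have e1 : ((k.choose t : ℝ)) * (t : ℝ) = (k : ℝ) * (((k-1).choose (t-1) : ℕ) : ℝ) := by
    exact_mod_cast choose_id1 ht1 htk.le
  have e2 : ((k.choose t : ℝ)) * (((k - t : ℕ)) : ℝ) = (k : ℝ) * (((k-1).choose t : ℕ) : ℝ) := by
    exact_mod_cast choose_id2 htk
  have hexp1 : k - 1 - (t - 1) = k - t := by omega
  have hexp2 : k - 1 - t = k - t - 1 := by omega
  unfold Db
  rw [hexp1, hexp2]
  linear_combination (-(p ^ (t-1) * (1 - p) ^ (k - t))) * e1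
    + (p ^ t * (1 - p) ^ (k - t - 1)) * e2

lemma hasDerivAt_Lc (k : ℕ) : ∀ s : ℕ, 1 ≤ s → s ≤ k → ∀ p : ℝ,
    HasDerivAt (fun q => Lc k s q) (-(Db k (s-1) p)) p := by
  intro s
  induction s with
  | zero => intro h; omega
  | succ n ih =>
    intro _ hsk p
    rcases Nat.eq_zero_or_pos n with hn | hn
    · subst hn
      have hfun : (fun q => Lc k 1 q) = fun q => Wb k 0 q := by
        funext q; simp [Lc]
      rw [hfun]
      simpa using hasDerivAt_Wb_zero k (by omega) p
    · have h1 := ih hn (by omega) p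
      have h2 := hasDerivAt_Wb_pos k hn (by omega) p
      have h3 := h1.add h2
      have hfun : (fun q => Lc k (n+1) q) = fun q => Lc k n q + Wb k n q := by
        funext q; simp [Lc, Finset.sum_range_succ]
      rw [hfun]
      refine h3.congr_deriv (Eq.symm ?_)
      simp only [Nat.add_sub_cancel]
      ring

lemma hasDerivAt_Hf (k : ℕ) {s : ℕ} (hs1 : 1 ≤ s) (hsk : s ≤ k) (p : ℝ) :
    HasDerivAt (fun q => Hf k s q) (-(Db k (s-1) p) + Db k (s-1) (1 - p)) p := by
  have h1 := hasDerivAt_Lc k s hs1 hsk p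
  have h2 := (hasDerivAt_Lc k s hs1 hsk (1-p)).comp p ((hasDerivAt_id p).const_sub 1)
  have h3 := h1.add h2
  have hfun : (fun q => Hf k s q) = fun q => Lc k s q + Lc k s (1 - q) := by
    funext q; rfl
  rw [hfun]
  refine h3.congr_deriv (Eq.symm ?_)
  ring

lemma Hf_min (k : ℕ) {s : ℕ} (hs1 : 1 ≤ s) (hsk : 2 * s ≤ k) {p : ℝ}
    (hp : p ∈ Set.Icc (0:ℝ) 1) : Hf k s (1/2) ≤ Hf k s p := by
  have hsk' : s ≤ k := by omega
  have hdiff : Differentiable ℝ (fun q => Hf k s q) :=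
    fun x => (hasDerivAt_Hf k hs1 hsk' x).differentiableAt
  have hanti : AntitoneOn (fun q => Hf k s q) (Set.Icc 0 (1/2)) := by
    apply antitoneOn_of_deriv_nonpos (convex_Icc _ _) hdiff.continuous.continuousOn
      hdiff.differentiableOn
    intro x hx
    rw [interior_Icc] at hx
    rw [(hasDerivAt_Hf k hs1 hsk' x).deriv]
    have hx0 : (0:ℝ) < x := hx.1
    have hx2 : x < 1/2 := hx.2
    set m := s - 1 with hm
    obtain ⟨r, hr⟩ : ∃ r, k - 1 - m = m + r := ⟨k - 2*s + 1, by omega⟩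
    have h5 : x ^ r ≤ (1-x) ^ r := pow_le_pow_left₀ (le_of_lt hx0) (by linarith) r
    have hc : (0:ℝ) ≤ (k:ℝ) * ((k-1).choose m : ℝ) * ((1-x)^m * x^m) := by
      have h6 : (0:ℝ) ≤ (1-x)^m := pow_nonneg (by linarith) m
      positivity
    have hle : Db k m (1 - x) ≤ Db k m x := by
      unfold Db
      rw [sub_sub_cancel, hr]
      calc (k:ℝ) * ((k-1).choose m : ℝ) * (1-x)^m * x^(m+r)
          = ((k:ℝ) * ((k-1).choose m : ℝ) * ((1-x)^m * x^m)) * x^r := by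
            rw [pow_add]; ring
        _ ≤ ((k:ℝ) * ((k-1).choose m : ℝ) * ((1-x)^m * x^m)) * (1-x)^r :=
            mul_le_mul_of_nonneg_left h5 hc
        _ = (k:ℝ) * ((k-1).choose m : ℝ) * x^m * (1-x)^(m+r) := by
            rw [pow_add]; ring
    linarith
  have hmem : (1/2 : ℝ) ∈ Set.Icc (0:ℝ) (1/2) := by norm_num
  have hswap : ∀ q : ℝ, Hf k s (1 - q) = Hf k s q := by
    intro q; unfold Hf; rw [sub_sub_cancel]; ring
  rcases le_or_gt p (1/2) with h | h
  · exact hanti ⟨hp.1, h⟩ hmem h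
  · have h1 : (1 - p) ∈ Set.Icc (0:ℝ) (1/2) := ⟨by linarith [hp.2], by linarith⟩
    calc Hf k s (1/2) ≤ Hf k s (1-p) := hanti h1 hmem (by linarith)
      _ = Hf k s p := hswap p

lemma telescope_Icc (A : ℕ → ℝ) (m : ℕ) : ∑ s ∈ Icc 1 m, (A s - A (s-1)) = A m - A 0 := by
  induction m with
  | zero => simp
  | succ n ih =>
    rw [Finset.sum_Icc_succ_top (by omega), ih]
    simp only [Nat.add_sub_cancel]
    ring

lemma cond_sum (k : ℕ) {s : ℕ} (hs1 : 1 ≤ s) (hs2 : s ≤ k / 2) (p : ℝ) :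
    ∑ t ∈ range (k+1), (if s ≤ t ∧ t ≤ k - s then Wb k t p else 0) = 1 - Hf k s p := by
  classical
  have hsk : 2 * s ≤ k := by omega
  have hsplit : ∀ t ∈ range (k+1), Wb k t p =
      (if s ≤ t ∧ t ≤ k - s then Wb k t p else 0)
      + ((if t < s then Wb k t p else 0) + (if k - s < t then Wb k t p else 0)) := by
    intro t ht
    have htk : t ≤ k := by simpa [Nat.lt_succ_iff] using Finset.mem_range.1 ht
    by_cases h1 : s ≤ t ∧ t ≤ k - s
    · rw [if_pos h1, if_neg (by omega), if_neg (by omega)]; ring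
    · rw [if_neg h1]
      by_cases h2 : t < s
      · rw [if_pos h2, if_neg (by omega)]; ring
      · rw [if_neg h2, if_pos (by omega)]; ring
  have hsum := Finset.sum_congr rfl hsplit
  rw [Finset.sum_add_distrib, Finset.sum_add_distrib, sum_Wb] at hsum
  have hlow : ∑ t ∈ range (k+1), (if t < s then Wb k t p else 0) = Lc k s p := by
    rw [← Finset.sum_filter]
    have hfl : (range (k+1)).filter (fun t => t < s) = range s := by
      ext t; simp only [Finset.mem_filter, Finset.mem_range]; omega
    rw [hfl]; rfl
  have hhigh : ∑ t ∈ range (k+1), (if k - s < t then Wb k t p else 0) = Lc k s (1 - p) := by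
    rw [← Finset.sum_filter]
    have h1 : (range (k+1)).filter (fun t => k - s < t) = Icc (k - s + 1) k := by
      ext t; simp only [Finset.mem_filter, Finset.mem_range, Finset.mem_Icc]; omega
    rw [h1]
    unfold Lc
    refine Finset.sum_nbij' (fun t => k - t) (fun u => k - u) ?_ ?_ ?_ ?_ ?_
    · intro t ht; simp only [Finset.mem_Icc] at ht; simp only [Finset.mem_range]; omega
    · intro u hu; simp only [Finset.mem_range] at hu; simp only [Finset.mem_Icc]; omega
    · intro t ht; simp only [Finset.mem_Icc] at ht; show k - (k - t) = t; omega
    · intro u hu; simp only [Finset.mem_range] at hu; show k - (k - u) = u; omega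
    · intro t ht
      simp only [Finset.mem_Icc] at ht
      have h2 : k - t ≤ k := by omega
      have h3 : k - (k - t) = t := by omega
      rw [← Wb_symm k h2 p, h3]
  rw [hlow, hhigh] at hsum
  unfold Hf
  linarith

lemma key_decomp (k : ℕ) (f : (Fin k → Bool) → ℝ)
    (hsym : ∀ x, f x = f (fun i => ! x i)) (p : ℝ) :
    biasedE k f p = levelAvg k f 0
      + ∑ s ∈ Icc 1 (k/2), (levelAvg k f s - levelAvg k f (s-1)) * (1 - Hf k s p) := by
  classical
  set A := levelAvg k f with hA
  rw [biasedE_eq]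
  have hAt : ∀ t ∈ range (k+1), A t * Wb k t p
      = A 0 * Wb k t p + ∑ s ∈ Icc 1 (k/2),
          (if s ≤ t ∧ t ≤ k - s then (A s - A (s-1)) * Wb k t p else 0) := by
    intro t ht
    have htk : t ≤ k := by simpa [Nat.lt_succ_iff] using Finset.mem_range.1 ht
    set m := min t (k - t) with hm
    have hmle : m ≤ k / 2 := by omega
    have h1 : ∑ s ∈ Icc 1 (k/2), (if s ≤ t ∧ t ≤ k - s then (A s - A (s-1)) * Wb k t p else 0)
        = ∑ s ∈ Icc 1 m, (A s - A (s-1)) * Wb k t p := by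
      rw [← Finset.sum_filter]
      refine Finset.sum_congr ?_ (fun _ _ => rfl)
      ext u
      simp only [Finset.mem_filter, Finset.mem_Icc]
      omega
    have h2 : ∑ s ∈ Icc 1 m, (A s - A (s-1)) * Wb k t p = (A m - A 0) * Wb k t p := by
      rw [← Finset.sum_mul, telescope_Icc]
    have h3 : A m = A t := by
      rcases le_or_gt t (k - t) with h | h
      · rw [hm, min_eq_left h]
      · rw [hm, min_eq_right (le_of_lt h)]
        exact levelAvg_symm k f hsym htk
    rw [h1, h2, h3]
    ring
  rw [Finset.sum_congr rfl hAt, Finset.sum_add_distrib, ← Finset.mul_sum, sum_Wb, mul_one,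
    Finset.sum_comm]
  congr 1
  refine Finset.sum_congr rfl fun u hu => ?_
  simp only [Finset.mem_Icc] at hu
  have : ∑ t ∈ range (k+1), (if u ≤ t ∧ t ≤ k - u then (A u - A (u-1)) * Wb k t p else 0)
      = (A u - A (u-1)) * ∑ t ∈ range (k+1), (if u ≤ t ∧ t ≤ k - u then Wb k t p else 0) := by
    rw [Finset.mul_sum]
    refine Finset.sum_congr rfl fun t _ => ?_
    rw [mul_ite, mul_zero]
  rw [this, cond_sum k hu.1 hu.2]

theorem symmetric_bias_max_at_half {k : ℕ} (f : (Fin k → Bool) → ℝ)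
    (hf0 : ∀ x, 0 ≤ f x)
    (hsym : ∀ x, f x = f (fun i => ! x i))
    (hmono : ∀ s t : ℕ, s ≤ t → 2 * t ≤ k → levelAvg k f s ≤ levelAvg k f t) :
    (∀ p ∈ Set.Icc (0 : ℝ) 1, biasedE k f p ≤ ((2 : ℝ) ^ k)⁻¹ * ∑ x : Fin k → Bool, f x) ∧
    biasedE k f (1 / 2) = ((2 : ℝ) ^ k)⁻¹ * ∑ x : Fin k → Bool, f x := by
  have hhalf : biasedE k f (1 / 2) = ((2 : ℝ) ^ k)⁻¹ * ∑ x : Fin k → Bool, f x := by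
    unfold biasedE
    rw [Finset.mul_sum]
    refine Finset.sum_congr rfl fun x _ => ?_
    have h : (1 : ℝ) - 1/2 = 1/2 := by norm_num
    rw [h, mul_assoc, ← pow_add, Nat.add_sub_cancel' (hw_le x)]
    rw [one_div, inv_pow, mul_comm]
  refine ⟨fun p hp => ?_, hhalf⟩
  rw [← hhalf, key_decomp k f hsym p, key_decomp k f hsym (1/2)]
  refine (add_le_add_iff_left _).2 (Finset.sum_le_sum fun s hs => ?_)
  · simp only [Finset.mem_Icc] at hs
    have h1 : levelAvg k f (s-1) ≤ levelAvg k f s :=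
      hmono (s-1) s (Nat.sub_le s 1) (by omega)
    have h2 : Hf k s (1/2) ≤ Hf k s p := Hf_min k hs.1 (by omega) hp
    nlinarith [h1, h2]
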